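/- Consider the reduced system di_A/dτ = (1 − (i_A + i_B)/n_max − α) i_A, di_B/dτ = (1 − (i_A + i_B)/n_max − α) i_B, with n_max > 0, 0 ≤ α < 1, and positive initial conditions. Then the ratio i_A(τ)/i_B(τ) is constant in τ, and i_A(τ) + i_B(τ) → (1−α) n_max as τ → ∞. -/

import Mathlib

open Real Filter

theorem stmt_13 (iA iB : ℝ → ℝ) (nmax α : ℝ)
    (hnmax : 0 < nmax) (hα : 0 ≤ α) (hα1 : α < 1)
    (hposA : ∀ τ : ℝ, 0 ≤ τ → 0 < iA τ)
    (hposB : ∀ τ : ℝ, 0 ≤ τ → 0 < iB τ)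
    (hA : ∀ τ : ℝ, 0 ≤ τ →
      HasDerivAt iA ((1 - (iA τ + iB τ) / nmax - α) * iA τ) τ)
    (hB : ∀ τ : ℝ, 0 ≤ τ →
      HasDerivAt iB ((1 - (iA τ + iB τ) / nmax - α) * iB τ) τ) :
    (∀ τ : ℝ, 0 ≤ τ → iA τ / iB τ = iA 0 / iB 0) ∧
      Filter.Tendsto (fun τ => iA τ + iB τ) Filter.atTop
        (nhds ((1 - α) * nmax)) := by
  have hr : (0:ℝ) < 1 - α := by linarith
  set r : ℝ := 1 - α with hrdef
  have hrn : 0 < r * nmax := mul_pos hr hnmax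
  -- ratio part
  have ratio : ∀ τ : ℝ, 0 ≤ τ → iA τ / iB τ = iA 0 / iB 0 := by
    intro τ hτ
    have hq : ∀ x : ℝ, 0 ≤ x → HasDerivAt (fun t => iA t / iB t) 0 x := by
      intro x hx
      have hbx := (hposB x hx).ne'
      have := (hA x hx).div (hB x hx) hbx
      refine this.congr_deriv ?_
      field_simp
      ring
    have := constant_of_has_deriv_right_zero
      (f := fun t => iA t / iB t) (a := 0) (b := τ)
      (fun x hx => (hq x hx.1).continuousAt.continuousWithinAt)
      (fun x hx => (hq x hx.1).hasDerivWithinAt)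
    exact this τ ⟨hτ, le_refl τ⟩
  refine ⟨ratio, ?_⟩
  -- sum part
  set s : ℝ → ℝ := fun τ => iA τ + iB τ with hsdef
  have hspos : ∀ τ : ℝ, 0 ≤ τ → 0 < s τ := fun τ hτ =>
    add_pos (hposA τ hτ) (hposB τ hτ)
  have hs : ∀ τ : ℝ, 0 ≤ τ → HasDerivAt s ((r - s τ / nmax) * s τ) τ := by
    intro τ hτ
    have := (hA τ hτ).add (hB τ hτ)
    refine this.congr_deriv ?_
    simp only [hsdef, hrdef]
    ring
  set h : ℝ → ℝ := fun τ => Real.exp (r * τ) * (s τ)⁻¹ -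
      (Real.exp (r * τ) - 1) * (r * nmax)⁻¹ with hhdef
  have hh : ∀ x : ℝ, 0 ≤ x → HasDerivAt h 0 x := by
    intro x hx
    have hsx := (hspos x hx).ne'
    have he : HasDerivAt (fun τ : ℝ => Real.exp (r * τ)) (Real.exp (r * x) * r) x := by
      simpa [mul_comm] using ((hasDerivAt_id x).const_mul r).exp
    have h1 := he.mul ((hs x hx).inv hsx)
    have h2 := (he.sub_const 1).mul_const (r * nmax)⁻¹
    have h3 := h1.sub h2
    refine h3.congr_deriv ?_
    have hex := (Real.exp_pos (r * x)).ne'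
    simp only [Pi.inv_apply]
    field_simp
    ring
  have hconst : ∀ τ : ℝ, 0 ≤ τ → h τ = h 0 := by
    intro τ hτ
    have := constant_of_has_deriv_right_zero (f := h) (a := 0) (b := τ)
      (fun x hx => (hh x hx.1).continuousAt.continuousWithinAt)
      (fun x hx => (hh x hx.1).hasDerivWithinAt)
    exact this τ ⟨hτ, le_refl τ⟩
  -- explicit formula for (s τ)⁻¹
  set F : ℝ → ℝ := fun τ => Real.exp (-(r * τ)) * (s 0)⁻¹ +
      (1 - Real.exp (-(r * τ))) * (r * nmax)⁻¹ with hFdef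
  have hFeq : ∀ τ : ℝ, 0 ≤ τ → (s τ)⁻¹ = F τ := by
    intro τ hτ
    have hc := hconst τ hτ
    have h0 : h 0 = (s 0)⁻¹ := by simp [hhdef]
    rw [h0] at hc
    have hex : Real.exp (r * τ) ≠ 0 := (Real.exp_pos _).ne'
    simp only [hhdef] at hc
    simp only [hFdef, Real.exp_neg]
    linear_combination (Real.exp (r * τ))⁻¹ * hc +
      ((r * nmax)⁻¹ - (s τ)⁻¹) * mul_inv_cancel₀ hex
  have hE : Tendsto (fun τ : ℝ => Real.exp (-(r * τ))) atTop (nhds 0) := by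
    exact Real.tendsto_exp_atBot.comp
      (tendsto_neg_atTop_atBot.comp (tendsto_id.const_mul_atTop hr))
  have hF : Tendsto F atTop (nhds ((r * nmax)⁻¹)) := by
    have : Tendsto F atTop (nhds (0 * (s 0)⁻¹ + (1 - 0) * (r * nmax)⁻¹)) :=
      ((hE.mul_const _).add ((tendsto_const_nhds.sub hE).mul_const _))
    simpa using this
  have hsinv : Tendsto (fun τ => (s τ)⁻¹) atTop (nhds ((r * nmax)⁻¹)) := by
    apply hF.congr'
    filter_upwards [eventually_ge_atTop (0:ℝ)] with τ hτ
    exact (hFeq τ hτ).symm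
  have : Tendsto s atTop (nhds (r * nmax)) := by
    have := hsinv.inv₀ (inv_ne_zero hrn.ne')
    simpa using this.congr' (by
      filter_upwards [eventually_ge_atTop (0:ℝ)] with τ hτ
      simp [inv_inv])
  simpa [hrdef] using this
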